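/- arXiv:2310.15341 — 2 statements merged into one kernel-verified Lean document; each statement's English description precedes it below -/
import Mathlib

section
/- Let A, M₁, …, M_k, L be n×n real matrices such that A ≤ M₁M₂⋯M_k L entrywise, each M₁, …, M_k is a nonsingular M-matrix, and the off-diagonal part of L is nonpositive (L_a ≤ 0). Assume there exists a nonzero vector e ≥ 0 with Ae ≥ 0 such that at least one of the matrices M₁, …, M_k, L connects N⁰(Ae) with N⁺(Ae). Then the matrix L is itself a nonsingular M-matrix. -/
open Matrix

/-- A real square matrix is a nonsingular M-matrix if its off-diagonal entries are
nonpositive, it is invertible, and all entries of its inverse are nonnegative. -/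
def IsNonsingMMatrix {n : ℕ} (M : Matrix (Fin n) (Fin n) ℝ) : Prop :=
  (∀ i j, i ≠ j → M i j ≤ 0) ∧ IsUnit M.det ∧ ∀ i j, 0 ≤ M⁻¹ i j

/-- `A` connects `N1` with `N2`: from every index in `N1` there is a path of
nonzero entries of `A` of length `r ≥ 1` ending in `N2`. -/
def Connects {n : ℕ} (A : Matrix (Fin n) (Fin n) ℝ) (N1 N2 : Set (Fin n)) : Prop :=
  ∀ i0 ∈ N1, ∃ r : ℕ, 1 ≤ r ∧ ∃ path : ℕ → Fin n, path 0 = i0 ∧ path r ∈ N2 ∧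
    ∀ k, 1 ≤ k → k ≤ r → A (path (k - 1)) (path k) ≠ 0

/-- `N⁰(v)`, the set of indices where `v` vanishes. -/
def Nzero {n : ℕ} (v : Fin n → ℝ) : Set (Fin n) := {i | v i = 0}

/-- `N⁺(v)`, the set of indices where `v` is positive. -/
def Npos {n : ℕ} (v : Fin n → ℝ) : Set (Fin n) := {i | 0 < v i}

/-- Diagonal part `A_d` of a matrix. -/
noncomputable def diagPart {n : ℕ} (A : Matrix (Fin n) (Fin n) ℝ) : Matrix (Fin n) (Fin n) ℝ :=
  Matrix.diagonal fun i => A i i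

/-- Positive off-diagonal part `A_a⁺` of a matrix. -/
noncomputable def offDiagPos {n : ℕ} (A : Matrix (Fin n) (Fin n) ℝ) : Matrix (Fin n) (Fin n) ℝ :=
  Matrix.of fun i j => if i ≠ j ∧ 0 < A i j then A i j else 0

/-- Negative off-diagonal part `A_a⁻ = A - A_d - A_a⁺` of a matrix. -/
noncomputable def offDiagNeg {n : ℕ} (A : Matrix (Fin n) (Fin n) ℝ) : Matrix (Fin n) (Fin n) ℝ :=
  (A - diagPart A) - offDiagPos A

section Helpers

variable {n : ℕ}

lemma mulVec_apply' (A : Matrix (Fin n) (Fin n) ℝ) (v : Fin n → ℝ) (i : Fin n) :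
    (A *ᵥ v) i = ∑ j, A i j * v j := rfl

lemma diag_mul_ge_one {M : Matrix (Fin n) (Fin n) ℝ} (hM : IsNonsingMMatrix M) (i : Fin n) :
    1 ≤ M⁻¹ i i * M i i := by
  have h1 : (M⁻¹ * M) i i = 1 := by
    rw [Matrix.nonsing_inv_mul M hM.2.1, Matrix.one_apply_eq]
  rw [Matrix.mul_apply] at h1
  have hsplit := Finset.sum_erase_add Finset.univ (fun l => M⁻¹ i l * M l i) (Finset.mem_univ i)
  have hnp : ∑ l ∈ Finset.univ.erase i, M⁻¹ i l * M l i ≤ 0 :=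
    Finset.sum_nonpos fun l hl =>
      mul_nonpos_of_nonneg_of_nonpos (hM.2.2 i l) (hM.1 l i (Finset.ne_of_mem_erase hl))
  linarith

lemma inv_diag_pos {M : Matrix (Fin n) (Fin n) ℝ} (hM : IsNonsingMMatrix M) (i : Fin n) :
    0 < M⁻¹ i i := by
  rcases (hM.2.2 i i).eq_or_lt with h | h
  · have := diag_mul_ge_one hM i
    rw [← h, zero_mul] at this
    linarith
  · exact h

lemma diag_pos {M : Matrix (Fin n) (Fin n) ℝ} (hM : IsNonsingMMatrix M) (i : Fin n) :
    0 < M i i := by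
  nlinarith [diag_mul_ge_one hM i, inv_diag_pos hM i]

lemma step_pos {M : Matrix (Fin n) (Fin n) ℝ} (hM : IsNonsingMMatrix M) {i l j : Fin n}
    (hil : 0 < M⁻¹ i l) (hlj : M l j ≠ 0) : 0 < M⁻¹ i j := by
  by_cases h : l = j
  · exact h ▸ hil
  have hMlj : M l j < 0 := (hM.1 l j h).lt_of_ne hlj
  have h1 : (M⁻¹ * M) i j = if i = j then 1 else 0 := by
    rw [Matrix.nonsing_inv_mul M hM.2.1]; exact Matrix.one_apply
  rw [Matrix.mul_apply] at h1
  have hsplit := Finset.sum_erase_add Finset.univ (fun l' => M⁻¹ i l' * M l' j) (Finset.mem_univ j)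
  have hlmem : l ∈ Finset.univ.erase j := Finset.mem_erase.mpr ⟨h, Finset.mem_univ l⟩
  have hsplit2 := Finset.sum_erase_add (Finset.univ.erase j) (fun l' => M⁻¹ i l' * M l' j) hlmem
  have hnp : ∑ l' ∈ (Finset.univ.erase j).erase l, M⁻¹ i l' * M l' j ≤ 0 :=
    Finset.sum_nonpos fun l' hl' =>
      mul_nonpos_of_nonneg_of_nonpos (hM.2.2 i l')
        (hM.1 l' j (Finset.ne_of_mem_erase (Finset.mem_of_mem_erase hl')))
  have hterm : M⁻¹ i l * M l j < 0 := mul_neg_of_pos_of_neg hil hMlj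
  have hδ : (0:ℝ) ≤ if i = j then 1 else 0 := by split <;> norm_num
  have hd : 0 < M⁻¹ i j * M j j := by linarith
  rcases (hM.2.2 i j).eq_or_lt with h' | h'
  · rw [← h', zero_mul] at hd; linarith
  · exact h'

lemma path_pos {M : Matrix (Fin n) (Fin n) ℝ} (hM : IsNonsingMMatrix M) (p : ℕ → Fin n) (r : ℕ)
    (hstep : ∀ k, 1 ≤ k → k ≤ r → M (p (k - 1)) (p k) ≠ 0) :
    ∀ t, t ≤ r → 0 < M⁻¹ (p 0) (p t) := by
  intro t
  induction t with
  | zero => exact fun _ => inv_diag_pos hM (p 0)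
  | succ t ih =>
    intro h
    have h1 := ih (Nat.le_of_succ_le h)
    have h2 := hstep (t + 1) (Nat.le_add_left 1 t) h
    simp only [Nat.add_sub_cancel] at h2
    exact step_pos hM h1 h2

lemma inv_mulVec_nonneg {M : Matrix (Fin n) (Fin n) ℝ} (hM : IsNonsingMMatrix M) {v : Fin n → ℝ}
    (hv : ∀ j, 0 ≤ v j) (i : Fin n) : 0 ≤ (M⁻¹ *ᵥ v) i := by
  rw [mulVec_apply']
  exact Finset.sum_nonneg fun j _ => mul_nonneg (hM.2.2 i j) (hv j)

lemma inv_mulVec_ge {M : Matrix (Fin n) (Fin n) ℝ} (hM : IsNonsingMMatrix M) {v : Fin n → ℝ}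
    (hv : ∀ j, 0 ≤ v j) (i j : Fin n) : M⁻¹ i j * v j ≤ (M⁻¹ *ᵥ v) i := by
  rw [mulVec_apply']
  exact Finset.single_le_sum (f := fun j => M⁻¹ i j * v j)
    (fun j _ => mul_nonneg (hM.2.2 i j) (hv j)) (Finset.mem_univ j)

lemma inv_mulVec_pos {M : Matrix (Fin n) (Fin n) ℝ} (hM : IsNonsingMMatrix M) {v : Fin n → ℝ}
    (hv : ∀ j, 0 ≤ v j) {i : Fin n} (hi : 0 < v i) : 0 < (M⁻¹ *ᵥ v) i :=
  lt_of_lt_of_le (mul_pos (inv_diag_pos hM i) hi) (inv_mulVec_ge hM hv i i)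

lemma connects_mono {A : Matrix (Fin n) (Fin n) ℝ} {N1 N2 N1' N2' : Set (Fin n)}
    (h : Connects A N1 N2) (h1 : N1' ⊆ N1) (h2 : N2 ⊆ N2') : Connects A N1' N2' := by
  intro i0 hi0
  obtain ⟨r, hr, p, hp0, hpr, hstep⟩ := h i0 (h1 hi0)
  exact ⟨r, hr, p, hp0, h2 hpr, hstep⟩

lemma lemC {M : Matrix (Fin n) (Fin n) ℝ} (hM : IsNonsingMMatrix M) {u : Fin n → ℝ}
    (hu : ∀ i, 0 ≤ u i) (hc : Connects M (Nzero u) (Npos u)) (i : Fin n) :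
    0 < (M⁻¹ *ᵥ u) i := by
  rcases (hu i).eq_or_lt with h0 | hpos
  · obtain ⟨r, hr, p, hp0, hpr, hstep⟩ := hc i (show u i = 0 from h0.symm)
    have hij := path_pos hM p r hstep r le_rfl
    rw [hp0] at hij
    exact lt_of_lt_of_le (mul_pos hij (show 0 < u (p r) from hpr)) (inv_mulVec_ge hM hu i (p r))
  · exact inv_mulVec_pos hM hu hpos

lemma listS (l : List (Matrix (Fin n) (Fin n) ℝ)) :
    (∀ N ∈ l, IsNonsingMMatrix N) → ∀ u w : Fin n → ℝ, (∀ i, 0 ≤ u i) →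
    (∀ i, u i ≤ (l.prod *ᵥ w) i) →
    (∀ i, 0 ≤ w i) ∧ (∀ i, 0 < u i → 0 < w i) := by
  induction l with
  | nil =>
    intro _ u w hu hle
    simp only [List.prod_nil, Matrix.one_mulVec] at hle
    exact ⟨fun i => (hu i).trans (hle i), fun i h => h.trans_le (hle i)⟩
  | cons N l ih =>
    intro hl u w hu hle
    have hN := hl N List.mem_cons_self
    have hl' : ∀ N' ∈ l, IsNonsingMMatrix N' := fun N' h => hl N' (List.mem_cons_of_mem _ h)
    have hle2 : ∀ i, (N⁻¹ *ᵥ u) i ≤ (l.prod *ᵥ w) i := by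
      intro i
      have e1 : N⁻¹ *ᵥ ((N :: l).prod *ᵥ w) = l.prod *ᵥ w := by
        rw [List.prod_cons, Matrix.mulVec_mulVec, ← Matrix.mul_assoc,
          Matrix.nonsing_inv_mul N hN.2.1, Matrix.one_mul]
      calc (N⁻¹ *ᵥ u) i ≤ (N⁻¹ *ᵥ ((N :: l).prod *ᵥ w)) i := by
            rw [mulVec_apply', mulVec_apply']
            exact Finset.sum_le_sum fun j _ =>
              mul_le_mul_of_nonneg_left (hle j) (hN.2.2 i j)
        _ = (l.prod *ᵥ w) i := by rw [e1]
    obtain ⟨h1, h2⟩ := ih hl' (N⁻¹ *ᵥ u) w (inv_mulVec_nonneg hN hu) hle2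
    exact ⟨h1, fun i h => h2 i (inv_mulVec_pos hN hu h)⟩

lemma listT (l : List (Matrix (Fin n) (Fin n) ℝ)) :
    (∀ N ∈ l, IsNonsingMMatrix N) → ∀ u w : Fin n → ℝ, (∀ i, 0 ≤ u i) →
    (∀ i, u i ≤ (l.prod *ᵥ w) i) →
    ((∃ N ∈ l, Connects N (Nzero u) (Npos u)) ∧ (∃ i, 0 < u i) ∨ (∀ i, 0 < u i)) →
    ∀ i, 0 < w i := by
  induction l with
  | nil =>
    intro _ u w hu hle hca i
    simp only [List.prod_nil, Matrix.one_mulVec] at hle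
    rcases hca with ⟨⟨N, hN, _⟩, _⟩ | hpos
    · simp at hN
    · exact (hpos i).trans_le (hle i)
  | cons N l ih =>
    intro hl u w hu hle hca
    have hN := hl N List.mem_cons_self
    have hl' : ∀ N' ∈ l, IsNonsingMMatrix N' := fun N' h => hl N' (List.mem_cons_of_mem _ h)
    have hu' : ∀ i, 0 ≤ (N⁻¹ *ᵥ u) i := inv_mulVec_nonneg hN hu
    have hmap : ∀ i, 0 < u i → 0 < (N⁻¹ *ᵥ u) i := fun i h => inv_mulVec_pos hN hu h
    have hle2 : ∀ i, (N⁻¹ *ᵥ u) i ≤ (l.prod *ᵥ w) i := by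
      intro i
      have e1 : N⁻¹ *ᵥ ((N :: l).prod *ᵥ w) = l.prod *ᵥ w := by
        rw [List.prod_cons, Matrix.mulVec_mulVec, ← Matrix.mul_assoc,
          Matrix.nonsing_inv_mul N hN.2.1, Matrix.one_mul]
      calc (N⁻¹ *ᵥ u) i ≤ (N⁻¹ *ᵥ ((N :: l).prod *ᵥ w)) i := by
            rw [mulVec_apply', mulVec_apply']
            exact Finset.sum_le_sum fun j _ =>
              mul_le_mul_of_nonneg_left (hle j) (hN.2.2 i j)
        _ = (l.prod *ᵥ w) i := by rw [e1]
    rcases hca with ⟨⟨N', hN', hconn⟩, ⟨i1, hi1⟩⟩ | hpos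
    · rcases List.mem_cons.mp hN' with rfl | hmem
      · exact ih hl' (N'⁻¹ *ᵥ u) w hu' hle2 (Or.inr (lemC hN hu hconn))
      · have hz : Nzero (N⁻¹ *ᵥ u) ⊆ Nzero u := by
          intro i hi
          have hi' : (N⁻¹ *ᵥ u) i = 0 := hi
          show u i = 0
          by_contra h
          exact (hmap i ((hu i).lt_of_ne (Ne.symm h))).ne' hi'
        have hp : Npos u ⊆ Npos (N⁻¹ *ᵥ u) := fun i hi => hmap i hi
        exact ih hl' _ w hu' hle2
          (Or.inl ⟨⟨N', hmem, connects_mono hconn hz hp⟩, ⟨i1, hmap i1 hi1⟩⟩)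
    · exact ih hl' _ w hu' hle2 (Or.inr fun i => hmap i (hpos i))

lemma keyD {L : Matrix (Fin n) (Fin n) ℝ} (hL : ∀ i j, i ≠ j → L i j ≤ 0)
    {x : Fin n → ℝ} (hx : ∀ i, 0 < x i) (hw : ∀ i, 0 ≤ (L *ᵥ x) i)
    (hc : Connects L (Nzero (L *ᵥ x)) (Npos (L *ᵥ x)))
    (y : Fin n → ℝ) (hy : ∀ i, 0 ≤ (L *ᵥ y) i) : ∀ i, 0 ≤ y i := by
  by_contra hcon
  push_neg at hcon
  obtain ⟨i₀, hi₀⟩ := hcon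
  obtain ⟨istar, -, hmax⟩ := Finset.exists_max_image Finset.univ (fun j => (-(y j)) / x j)
    ⟨i₀, Finset.mem_univ _⟩
  set m := (-(y istar)) / x istar with hm
  have hm0 : 0 < m :=
    lt_of_lt_of_le (div_pos (neg_pos.mpr hi₀) (hx i₀)) (hmax i₀ (Finset.mem_univ _))
  set y' := fun j => y j + m * x j with hy'def
  have hy'0 : ∀ j, 0 ≤ y' j := by
    intro j
    have h1 := hmax j (Finset.mem_univ _)
    have h2 := (div_le_iff₀ (hx j)).mp h1
    simp only [hy'def]
    linarith
  have hy'star : y' istar = 0 := by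
    have hxne : x istar ≠ 0 := (hx istar).ne'
    show y istar + m * x istar = 0
    rw [hm, div_mul_cancel₀ _ hxne]
    ring
  have hLy' : ∀ i, (L *ᵥ y') i = (L *ᵥ y) i + m * (L *ᵥ x) i := by
    intro i
    have hfun : y' = y + m • x := by funext j; simp [hy'def]
    rw [hfun, Matrix.mulVec_add, Matrix.mulVec_smul]
    simp
  have key : ∀ i, y' i = 0 → (L *ᵥ x) i = 0 ∧ ∀ j, j ≠ i → L i j ≠ 0 → y' j = 0 := by
    intro i hi
    have h1 : (L *ᵥ y') i = ∑ j, L i j * y' j := rfl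
    have hsplit := Finset.sum_erase_add Finset.univ (fun j => L i j * y' j) (Finset.mem_univ i)
    have hterms : ∀ j ∈ Finset.univ.erase i, L i j * y' j ≤ 0 := by
      intro j hj
      rw [mul_comm]
      exact mul_nonpos_of_nonneg_of_nonpos (hy'0 j) (hL i j (Finset.ne_of_mem_erase hj).symm)
    have hnp : ∑ j ∈ Finset.univ.erase i, L i j * y' j ≤ 0 := Finset.sum_nonpos hterms
    have hge : 0 ≤ (L *ᵥ y') i := by
      rw [hLy' i]
      exact add_nonneg (hy i) (mul_nonneg hm0.le (hw i))
    have hzero : (L *ᵥ y') i = 0 := by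
      apply le_antisymm _ hge
      rw [h1, ← hsplit]
      simp only [hi, mul_zero, add_zero]
      exact hnp
    constructor
    · have h3 := hLy' i
      rw [hzero] at h3
      have h4 : m * (L *ᵥ x) i ≤ 0 := by linarith [hy i]
      have h5 := mul_nonneg hm0.le (hw i)
      nlinarith [hw i]
    · intro j hji hLij
      have hsum0 : ∑ j ∈ Finset.univ.erase i, L i j * y' j = 0 := by
        rw [h1] at hzero
        rw [← hsplit] at hzero
        simp only [hi, mul_zero, add_zero] at hzero
        exact hzero
      have h6 := (Finset.sum_eq_zero_iff_of_nonpos hterms).mp hsum0 j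
        (Finset.mem_erase.mpr ⟨hji, Finset.mem_univ _⟩)
      rcases mul_eq_zero.mp h6 with h | h
      · exact absurd h hLij
      · exact h
  obtain ⟨w0, -⟩ := key istar hy'star
  obtain ⟨r, hr, p, hp0, hpr, hstep⟩ := hc istar w0
  have hpath : ∀ t, t ≤ r → y' (p t) = 0 := by
    intro t
    induction t with
    | zero => intro _; rw [hp0]; exact hy'star
    | succ t ih =>
      intro hle
      have ht := ih (Nat.le_of_succ_le hle)
      by_cases heq : p t = p (t + 1)
      · rw [← heq]; exact ht
      · have hstep' := hstep (t + 1) (Nat.le_add_left 1 t) hle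
        simp only [Nat.add_sub_cancel] at hstep'
        exact (key (p t) ht).2 (p (t + 1)) (fun h => heq h.symm) hstep'
  have hfin := (key (p r) (hpath r le_rfl)).1
  exact (show 0 < (L *ᵥ x) (p r) from hpr).ne' hfin

lemma keyD' {L : Matrix (Fin n) (Fin n) ℝ} (hL : ∀ i j, i ≠ j → L i j ≤ 0)
    {x : Fin n → ℝ} (hx : ∀ i, 0 < x i) (hw : ∀ i, 0 ≤ (L *ᵥ x) i)
    (hc : Connects L (Nzero (L *ᵥ x)) (Npos (L *ᵥ x))) :
    IsNonsingMMatrix L := by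
  have hinj := keyD hL hx hw hc
  have hdet : IsUnit L.det := by
    rw [isUnit_iff_ne_zero]
    intro h0
    obtain ⟨v, hv0, hv⟩ := (Matrix.exists_mulVec_eq_zero_iff).mpr h0
    have h1 : ∀ i, 0 ≤ v i := hinj v (fun i => by rw [hv]; exact le_refl 0)
    have h2 : ∀ i, 0 ≤ (-v) i := hinj (-v) (fun i => by
      rw [Matrix.mulVec_neg, hv]; simp)
    apply hv0
    funext i
    have h3 := h2 i
    simp only [Pi.neg_apply] at h3
    show v i = 0
    exact le_antisymm (by linarith) (h1 i)
  refine ⟨hL, hdet, ?_⟩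
  intro i j
  have hcol : ∀ i', 0 ≤ (L⁻¹ *ᵥ Pi.single j 1) i' := by
    apply hinj
    intro i'
    rw [Matrix.mulVec_mulVec, Matrix.mul_nonsing_inv _ hdet, Matrix.one_mulVec]
    rcases eq_or_ne i' j with rfl | h
    · simp
    · simp [Pi.single_apply, h]
  have := hcol i
  rw [Matrix.mulVec_single] at this
  simpa using this

end Helpers

theorem L_is_M_matrix
    {n k : ℕ} (A L : Matrix (Fin n) (Fin n) ℝ) (M : Fin k → Matrix (Fin n) (Fin n) ℝ)
    (hle : ∀ i j, A i j ≤ ((List.ofFn M).prod * L) i j)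
    (hM : ∀ i, IsNonsingMMatrix (M i))
    (hL : ∀ i j, i ≠ j → L i j ≤ 0)
    (e : Fin n → ℝ) (he0 : e ≠ 0) (he : ∀ i, 0 ≤ e i)
    (hAe : ∀ i, 0 ≤ A.mulVec e i)
    (hconn : (∃ i, Connects (M i) (Nzero (A.mulVec e)) (Npos (A.mulVec e))) ∨
      Connects L (Nzero (A.mulVec e)) (Npos (A.mulVec e))) :
    IsNonsingMMatrix L := by
  rcases Nat.eq_zero_or_pos n with h0 | hn
  · subst h0
    refine ⟨fun i => i.elim0, ?_, fun i => i.elim0⟩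
    rw [Matrix.det_isEmpty]
    exact isUnit_one
  have hall : ∀ N ∈ List.ofFn M, IsNonsingMMatrix N := by
    intro N hN
    rw [List.mem_ofFn] at hN
    obtain ⟨i, rfl⟩ := hN
    exact hM i
  have hle' : ∀ i, (A *ᵥ e) i ≤ ((List.ofFn M).prod *ᵥ (L *ᵥ e)) i := by
    intro i
    rw [Matrix.mulVec_mulVec, mulVec_apply', mulVec_apply']
    exact Finset.sum_le_sum fun j _ => mul_le_mul_of_nonneg_right (hle i j) (he j)
  have hne : ∃ i, 0 < (A *ᵥ e) i := by
    by_contra hcon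
    push_neg at hcon
    have hz : ∀ i, (A *ᵥ e) i = 0 := fun i => le_antisymm (hcon i) (hAe i)
    have hFalse : ∀ B : Matrix (Fin n) (Fin n) ℝ,
        Connects B (Nzero (A *ᵥ e)) (Npos (A *ᵥ e)) → False := by
      intro B hB
      obtain ⟨r, hr, p, hp0, hpr, -⟩ := hB ⟨0, hn⟩ (hz _)
      exact (show 0 < (A *ᵥ e) (p r) from hpr).ne' (hz _)
    rcases hconn with ⟨i, hC⟩ | hC
    · exact hFalse _ hC
    · exact hFalse _ hC
  rcases hconn with ⟨iM, hC⟩ | hC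
  · have hwpos : ∀ i, 0 < (L *ᵥ e) i :=
      listT (List.ofFn M) hall (A *ᵥ e) (L *ᵥ e) hAe hle'
        (Or.inl ⟨⟨M iM, by rw [List.mem_ofFn]; exact ⟨iM, rfl⟩, hC⟩, hne⟩)
    have hepos : ∀ i, 0 < e i := by
      intro i
      rcases (he i).lt_or_eq with h | h
      · exact h
      · exfalso
        have h2 : (L *ᵥ e) i ≤ 0 := by
          rw [mulVec_apply']
          apply Finset.sum_nonpos
          intro j _
          by_cases hji : j = i
          · subst hji; rw [← h, mul_zero]
          · rw [mul_comm]
            exact mul_nonpos_of_nonneg_of_nonpos (he j) (hL i j (Ne.symm hji))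
        linarith [hwpos i]
    exact keyD' hL hepos (fun i => (hwpos i).le)
      (fun i0 hi0 => absurd (show (L *ᵥ e) i0 = 0 from hi0) (hwpos i0).ne')
  · obtain ⟨hw0, himp⟩ := listS (List.ofFn M) hall (A *ᵥ e) (L *ᵥ e) hAe hle'
    have hNz : ∀ i, (L *ᵥ e) i = 0 → (A *ᵥ e) i = 0 := by
      intro i hwi
      by_contra h
      exact (himp i ((hAe i).lt_of_ne (Ne.symm h))).ne' hwi
    have hkey : ∀ i, e i = 0 → (L *ᵥ e) i = 0 ∧ ∀ j, j ≠ i → L i j ≠ 0 → e j = 0 := by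
      intro i hi
      have h1 : (L *ᵥ e) i = ∑ j, L i j * e j := rfl
      have hsplit := Finset.sum_erase_add Finset.univ (fun j => L i j * e j) (Finset.mem_univ i)
      have hterms : ∀ j ∈ Finset.univ.erase i, L i j * e j ≤ 0 := by
        intro j hj
        rw [mul_comm]
        exact mul_nonpos_of_nonneg_of_nonpos (he j) (hL i j (Finset.ne_of_mem_erase hj).symm)
      have hnp := Finset.sum_nonpos hterms
      have hw0i : (L *ᵥ e) i = 0 := by
        apply le_antisymm _ (hw0 i)
        rw [h1, ← hsplit]
        simp only [hi, mul_zero, add_zero]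
        exact hnp
      refine ⟨hw0i, ?_⟩
      intro j hji hLij
      have hsum0 : ∑ j ∈ Finset.univ.erase i, L i j * e j = 0 := by
        rw [h1, ← hsplit] at hw0i
        simp only [hi, mul_zero, add_zero] at hw0i
        exact hw0i
      have h6 := (Finset.sum_eq_zero_iff_of_nonpos hterms).mp hsum0 j
        (Finset.mem_erase.mpr ⟨hji, Finset.mem_univ _⟩)
      rcases mul_eq_zero.mp h6 with h | h
      · exact absurd h hLij
      · exact h
    have hepos : ∀ i, 0 < e i := by
      intro i
      rcases (he i).lt_or_eq with h | h
      · exact h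
      · exfalso
        obtain ⟨hwi, -⟩ := hkey i h.symm
        obtain ⟨r, hr, p, hp0, hpr, hstep⟩ := hC i (hNz i hwi)
        have hpath : ∀ t, t ≤ r → e (p t) = 0 := by
          intro t
          induction t with
          | zero => intro _; rw [hp0]; exact h.symm
          | succ t ih =>
            intro hle2
            have ht := ih (Nat.le_of_succ_le hle2)
            by_cases heq : p t = p (t + 1)
            · rw [← heq]; exact ht
            · have hstep' := hstep (t + 1) (Nat.le_add_left 1 t) hle2
              simp only [Nat.add_sub_cancel] at hstep'
              exact (hkey (p t) ht).2 (p (t + 1)) (fun hh => heq hh.symm) hstep'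
        have hz := hpath r le_rfl
        have hwpr : (L *ᵥ e) (p r) = 0 := (hkey (p r) hz).1
        exact (show 0 < (A *ᵥ e) (p r) from hpr).ne' (hNz _ hwpr)
    have hCw : Connects L (Nzero (L *ᵥ e)) (Npos (L *ᵥ e)) := by
      intro i0 hi0
      obtain ⟨r, hr, p, hp0, hpr, hstep⟩ := hC i0 (hNz i0 hi0)
      exact ⟨r, hr, p, hp0, himp _ hpr, hstep⟩
    exact keyD' hL hepos hw0 hCw
end

section
/- (Lorenz's condition) Let A be an n×n real matrix whose negative off-diagonal part admits a decomposition A_a⁻ = A^z + A^s with A^z ≤ 0 and A^s ≤ 0 entrywise, such that: (1) A_d + A^z is a nonsingular M-matrix (in particular the diagonal entries of A are positive, so A_d is invertible); (2) A_a⁺ ≤ A^z A_d⁻¹ A^s entrywise; (3) there exists a nonzero vector e ≥ 0 with Ae ≥ 0 such that A^z or A^s connects N⁰(Ae) with N⁺(Ae). Then A is a product of two nonsingular M-matrices; in particular A is invertible and A⁻¹ ≥ 0 entrywise. -/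
open Matrix

lemma matvec_apply {n : ℕ} (B : Matrix (Fin n) (Fin n) ℝ) (v : Fin n → ℝ) (i : Fin n) :
    B.mulVec v i = ∑ j, B i j * v j := rfl

lemma mmatrix_diag_pos {n : ℕ} {M : Matrix (Fin n) (Fin n) ℝ}
    (h : IsNonsingMMatrix M) (i : Fin n) : 0 < M i i ∧ 0 < M⁻¹ i i := by
  obtain ⟨hoff, hdet, hinv⟩ := h
  have h1 : (M * M⁻¹) i i = 1 := by rw [Matrix.mul_nonsing_inv M hdet]; simp [Matrix.one_apply]
  rw [Matrix.mul_apply] at h1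
  have hsplit := Finset.add_sum_erase Finset.univ (fun k => M i k * M⁻¹ k i) (Finset.mem_univ i)
  have hrest : ∑ k ∈ Finset.univ.erase i, M i k * M⁻¹ k i ≤ 0 :=
    Finset.sum_nonpos fun k hk =>
      mul_nonpos_of_nonpos_of_nonneg (hoff i k (Ne.symm (Finset.ne_of_mem_erase hk))) (hinv k i)
  have hge : 1 ≤ M i i * M⁻¹ i i := by
    have := hsplit.trans h1
    linarith
  have h2 : 0 < M⁻¹ i i := by
    rcases (hinv i i).lt_or_eq with h | h
    · exact h
    · exfalso; rw [← h, mul_zero] at hge; linarith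
  refine ⟨?_, h2⟩
  nlinarith

lemma mmatrix_inv_step {n : ℕ} {M : Matrix (Fin n) (Fin n) ℝ}
    (h : IsNonsingMMatrix M) {i k j : Fin n}
    (hik : 0 < M⁻¹ i k) (hkj : k ≠ j) (hMkj : M k j ≠ 0) : 0 < M⁻¹ i j := by
  rcases eq_or_ne i j with rfl | hij
  · exact (mmatrix_diag_pos h i).2
  obtain ⟨hoff, hdet, hinv⟩ := h
  have h0 : (M⁻¹ * M) i j = 0 := by
    rw [Matrix.nonsing_inv_mul M hdet]; simp [Matrix.one_apply, hij]
  rw [Matrix.mul_apply] at h0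
  have hsplit := Finset.add_sum_erase Finset.univ (fun l => M⁻¹ i l * M l j) (Finset.mem_univ j)
  have hk' : k ∈ Finset.univ.erase j := Finset.mem_erase.mpr ⟨hkj, Finset.mem_univ k⟩
  have hsplit2 := Finset.add_sum_erase (Finset.univ.erase j) (fun l => M⁻¹ i l * M l j) hk'
  have hterm : M⁻¹ i k * M k j < 0 :=
    mul_neg_of_pos_of_neg hik (lt_of_le_of_ne (hoff k j hkj) hMkj)
  have hrest2 : ∑ l ∈ (Finset.univ.erase j).erase k, M⁻¹ i l * M l j ≤ 0 :=
    Finset.sum_nonpos fun l hl =>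
      mul_nonpos_of_nonneg_of_nonpos (hinv i l)
        (hoff l j (Finset.ne_of_mem_erase (Finset.mem_of_mem_erase hl)))
  have hjj : 0 < M j j := (mmatrix_diag_pos ⟨hoff, hdet, hinv⟩ j).1
  have hpos : 0 < M⁻¹ i j * M j j := by
    have e1 : M⁻¹ i j * M j j + ∑ l ∈ Finset.univ.erase j, M⁻¹ i l * M l j = 0 := by
      rw [hsplit]; exact h0
    have e2 : M⁻¹ i k * M k j + ∑ l ∈ (Finset.univ.erase j).erase k, M⁻¹ i l * M l j
        = ∑ l ∈ Finset.univ.erase j, M⁻¹ i l * M l j := hsplit2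
    linarith
  by_contra hcon
  push_neg at hcon
  nlinarith

lemma monotone_isNonsingMMatrix {n : ℕ} {B : Matrix (Fin n) (Fin n) ℝ}
    (hZ : ∀ i j, i ≠ j → B i j ≤ 0)
    (hmono : ∀ x : Fin n → ℝ, (∀ i, 0 ≤ B.mulVec x i) → ∀ i, 0 ≤ x i) :
    IsNonsingMMatrix B := by
  have hinj : ∀ x, B.mulVec x = 0 → x = 0 := by
    intro x hx
    have h1 : ∀ i, 0 ≤ x i := hmono x (by simp [hx])
    have h2 : ∀ i, 0 ≤ (-x) i := hmono (-x) (by simp [Matrix.mulVec_neg, hx])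
    funext i
    have := h2 i
    simp only [Pi.neg_apply, neg_nonneg] at this
    exact le_antisymm this (h1 i)
  have hdet : IsUnit B.det := by
    rw [isUnit_iff_ne_zero]
    intro h
    obtain ⟨v, hv0, hv⟩ := Matrix.exists_mulVec_eq_zero_iff.mpr h
    exact hv0 (hinj v hv)
  refine ⟨hZ, hdet, fun i j => ?_⟩
  have hcol : ∀ i2, B.mulVec (fun k => B⁻¹ k j) i2 = (B * B⁻¹) i2 j := by
    intro i2; rw [Matrix.mul_apply]; rfl
  have hpos : ∀ i2, 0 ≤ B.mulVec (fun k => B⁻¹ k j) i2 := by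
    intro i2
    rw [hcol, Matrix.mul_nonsing_inv B hdet, Matrix.one_apply]
    split <;> norm_num
  exact hmono _ hpos i

lemma chain_trap {n : ℕ} {B : Matrix (Fin n) (Fin n) ℝ} {g : Fin n → ℝ}
    (hconn : Connects B (Nzero g) (Npos g))
    {S : Set (Fin n)} (hS0 : S ⊆ Nzero g)
    (hstep : ∀ i ∈ S, ∀ j, B i j ≠ 0 → j ∈ S) :
    ∀ i, i ∉ S := by
  intro i hi
  obtain ⟨r, hr, path, hp0, hpr, hpath⟩ := hconn i (hS0 hi)
  have hin : ∀ k, k ≤ r → path k ∈ S := by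
    intro k
    induction k with
    | zero => intro _; rw [hp0]; exact hi
    | succ m ih =>
      intro hm
      have hmS := ih (le_trans (Nat.le_succ m) hm)
      have hB := hpath (m + 1) (Nat.succ_le_succ (Nat.zero_le m)) hm
      have h' : B (path m) (path (m + 1)) ≠ 0 := by simpa using hB
      exact hstep _ hmS _ h'
  have h1 : g (path r) = 0 := hS0 (hin r le_rfl)
  have h2 : 0 < g (path r) := hpr
  linarith

lemma lemmaK {n : ℕ} {B : Matrix (Fin n) (Fin n) ℝ} {e : Fin n → ℝ}
    (hZ : ∀ i j, i ≠ j → B i j ≤ 0) (he : ∀ i, 0 ≤ e i)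
    (hg : ∀ i, 0 ≤ B.mulVec e i)
    (hconn : Connects B (Nzero (B.mulVec e)) (Npos (B.mulVec e)))
    (x : Fin n → ℝ) (hx : ∀ i, 0 ≤ B.mulVec x i) : ∀ i, 0 ≤ x i := by
  have key1 : ∀ i, e i = 0 → (B.mulVec e i = 0 ∧ ∀ j, B i j ≠ 0 → e j = 0) := by
    intro i hei
    have hterms : ∀ j ∈ Finset.univ, B i j * e j ≤ 0 := by
      intro j _
      rcases eq_or_ne i j with rfl | hij
      · rw [hei, mul_zero]
      · exact mul_nonpos_of_nonpos_of_nonneg (hZ i j hij) (he j)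
    have hsum : ∑ j, B i j * e j ≤ 0 := Finset.sum_nonpos hterms
    have hzero : ∑ j, B i j * e j = 0 := le_antisymm hsum (by rw [← matvec_apply]; exact hg i)
    have hall := (Finset.sum_eq_zero_iff_of_nonpos hterms).mp hzero
    refine ⟨by rw [matvec_apply]; exact hzero, fun j hBij => ?_⟩
    rcases mul_eq_zero.mp (hall j (Finset.mem_univ j)) with h | h
    · exact absurd h hBij
    · exact h
  have hepos : ∀ i, 0 < e i := by
    intro i
    rcases (he i).lt_or_eq with h | h
    · exact h
    · exfalso
      exact chain_trap hconn (S := {i | e i = 0})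
        (fun j hj => (key1 j hj).1) (fun j hj k hk => (key1 j hj).2 k hk) i h.symm
  by_contra hcon
  push_neg at hcon
  obtain ⟨q, hq⟩ := hcon
  have hne : Nonempty (Fin n) := ⟨q⟩
  obtain ⟨i0, hi0⟩ := Finite.exists_max (fun i => -x i / e i)
  set t := -x i0 / e i0 with ht
  have htpos : 0 < t := lt_of_lt_of_le (div_pos (by linarith) (hepos q)) (hi0 q)
  have hxge : ∀ j, -(t * e j) ≤ x j := by
    intro j
    have h1 := (div_le_iff₀ (hepos j)).mp (hi0 j)
    linarith [h1]
  have hi0F : x i0 = -(t * e i0) := by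
    have h1 : t * e i0 = -x i0 := div_mul_cancel₀ _ (ne_of_gt (hepos i0))
    linarith
  have key2 : ∀ i, x i = -(t * e i) →
      (B.mulVec e i = 0 ∧ ∀ j, B i j ≠ 0 → x j = -(t * e j)) := by
    intro i hiF
    have hw : ∀ j, 0 ≤ x j + t * e j := fun j => by linarith [hxge j]
    have hwi : x i + t * e i = 0 := by rw [hiF]; ring
    have hterms : ∀ j ∈ Finset.univ, B i j * (x j + t * e j) ≤ 0 := by
      intro j _
      rcases eq_or_ne i j with rfl | hij
      · rw [hwi, mul_zero]
      · exact mul_nonpos_of_nonpos_of_nonneg (hZ i j hij) (hw j)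
    have hsum0 : ∑ j, B i j * (x j + t * e j) = B.mulVec x i + t * B.mulVec e i := by
      rw [matvec_apply, matvec_apply, Finset.mul_sum, ← Finset.sum_add_distrib]
      exact Finset.sum_congr rfl fun j _ => by ring
    have hsumle : ∑ j, B i j * (x j + t * e j) ≤ 0 := Finset.sum_nonpos hterms
    have hgi : B.mulVec e i = 0 := by
      by_contra h'
      have h'' : 0 < B.mulVec e i := lt_of_le_of_ne (hg i) (Ne.symm h')
      nlinarith [hx i]
    have hzero : ∑ j, B i j * (x j + t * e j) = 0 := by
      rw [hsum0, hgi, mul_zero, add_zero] at hsumle ⊢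
      exact le_antisymm hsumle (hx i)
    have hall := (Finset.sum_eq_zero_iff_of_nonpos hterms).mp hzero
    refine ⟨hgi, fun j hBij => ?_⟩
    rcases mul_eq_zero.mp (hall j (Finset.mem_univ j)) with h | h
    · exact absurd h hBij
    · linarith [h]
  exact chain_trap hconn (S := {i | x i = -(t * e i)})
    (fun j hj => (key2 j hj).1) (fun j hj k hk => (key2 j hj).2 k hk) i0 hi0F

theorem lorenz_condition
    {n : ℕ} (A Az As : Matrix (Fin n) (Fin n) ℝ)
    (hdecomp : offDiagNeg A = Az + As)
    (hAz : ∀ i j, Az i j ≤ 0) (hAs : ∀ i j, As i j ≤ 0)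
    (h1 : IsNonsingMMatrix (diagPart A + Az))
    (h2 : ∀ i j, offDiagPos A i j ≤ (Az * (diagPart A)⁻¹ * As) i j)
    (e : Fin n → ℝ) (he0 : e ≠ 0) (he : ∀ i, 0 ≤ e i)
    (hAe : ∀ i, 0 ≤ A.mulVec e i)
    (hconn : Connects Az (Nzero (A.mulVec e)) (Npos (A.mulVec e)) ∨
      Connects As (Nzero (A.mulVec e)) (Npos (A.mulVec e))) :
    (∃ M1 M2 : Matrix (Fin n) (Fin n) ℝ,
      IsNonsingMMatrix M1 ∧ IsNonsingMMatrix M2 ∧ A = M1 * M2) ∧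
      IsUnit A.det ∧ ∀ i j, 0 ≤ A⁻¹ i j := by
  classical
  set M1 : Matrix (Fin n) (Fin n) ℝ := diagPart A + Az with hM1def
  -- diagonal entries of Az and As vanish
  have hdiag0 : ∀ i, Az i i = 0 ∧ As i i = 0 := by
    intro i
    have h := congrFun (congrFun hdecomp i) i
    have h1' : offDiagNeg A i i = 0 := by
      simp [offDiagNeg, diagPart, offDiagPos, Matrix.sub_apply]
    rw [h1', Matrix.add_apply] at h
    constructor <;> linarith [hAz i i, hAs i i, h.symm]
  have hM1dd : ∀ i, M1 i i = A i i := by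
    intro i
    rw [hM1def, Matrix.add_apply, (hdiag0 i).1, add_zero, diagPart, Matrix.diagonal_apply_eq]
  have hM1od : ∀ i j, i ≠ j → M1 i j = Az i j := by
    intro i j hij
    rw [hM1def, Matrix.add_apply, diagPart, Matrix.diagonal_apply_ne _ hij, zero_add]
  have hApos : ∀ i, 0 < A i i := fun i => hM1dd i ▸ (mmatrix_diag_pos h1 i).1
  -- the diagonal part and its inverse
  have hDdet : IsUnit (diagPart A).det := by
    rw [diagPart, Matrix.det_diagonal, isUnit_iff_ne_zero]
    exact ne_of_gt (Finset.prod_pos fun i _ => hApos i)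
  have hDinv : (diagPart A)⁻¹ = Matrix.diagonal (fun i => (A i i)⁻¹) := by
    apply Matrix.inv_eq_right_inv
    rw [diagPart, Matrix.diagonal_mul_diagonal]
    rw [show (fun i => A i i * (A i i)⁻¹) = fun _ => (1:ℝ) from
      funext fun i => mul_inv_cancel₀ (ne_of_gt (hApos i)), Matrix.diagonal_one]
  set R : Matrix (Fin n) (Fin n) ℝ := Az * (diagPart A)⁻¹ * As - offDiagPos A with hRdef
  have hR : ∀ i j, 0 ≤ R i j := by
    intro i j
    rw [hRdef, Matrix.sub_apply, sub_nonneg]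
    exact h2 i j
  set M2 : Matrix (Fin n) (Fin n) ℝ := M1⁻¹ * A with hM2def
  have hfact : A = M1 * M2 := by
    rw [hM2def, ← Matrix.mul_assoc, Matrix.mul_nonsing_inv _ h1.2.1, Matrix.one_mul]
  -- the algebraic identity
  have hA0 : A = diagPart A + offDiagPos A + (Az + As) := by
    rw [← hdecomp, offDiagNeg]; abel
  have hA1 : M1 * (1 + (diagPart A)⁻¹ * As) - R = A := by
    have h3 : diagPart A * ((diagPart A)⁻¹ * As) = As := by
      rw [← Matrix.mul_assoc, Matrix.mul_nonsing_inv _ hDdet, Matrix.one_mul]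
    rw [hM1def, hRdef, Matrix.add_mul, Matrix.mul_add, Matrix.mul_add, Matrix.mul_one,
      Matrix.mul_one, h3, Matrix.mul_assoc]
    conv_rhs => rw [hA0]
    abel
  have hM2eq : M2 = (1 + (diagPart A)⁻¹ * As) - M1⁻¹ * R := by
    rw [hM2def]
    conv_lhs => rw [← hA1]
    rw [Matrix.mul_sub, ← Matrix.mul_assoc,
      Matrix.nonsing_inv_mul _ h1.2.1, Matrix.one_mul]
  have hM1invR : ∀ i j, 0 ≤ (M1⁻¹ * R) i j := by
    intro i j
    rw [Matrix.mul_apply]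
    exact Finset.sum_nonneg fun k _ => mul_nonneg (h1.2.2 i k) (hR k j)
  have hM2od : ∀ i j, i ≠ j → M2 i j = (A i i)⁻¹ * As i j - (M1⁻¹ * R) i j := by
    intro i j hij
    rw [hM2eq, Matrix.sub_apply, Matrix.add_apply, Matrix.one_apply_ne hij, hDinv,
      Matrix.diagonal_mul, zero_add]
  have hM2Z : ∀ i j, i ≠ j → M2 i j ≤ 0 := by
    intro i j hij
    rw [hM2od i j hij]
    have := mul_nonpos_of_nonneg_of_nonpos (le_of_lt (inv_pos.mpr (hApos i))) (hAs i j)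
    linarith [hM1invR i j]
  have hM2As : ∀ i j, i ≠ j → As i j ≠ 0 → M2 i j ≠ 0 := by
    intro i j hij hAsij
    rw [hM2od i j hij]
    have h4 : (A i i)⁻¹ * As i j < 0 :=
      mul_neg_of_pos_of_neg (inv_pos.mpr (hApos i)) (lt_of_le_of_ne (hAs i j) hAsij)
    have := hM1invR i j
    intro hc
    linarith [hc]
  -- the vector g = M2 e
  have hgeq : ∀ i, M2.mulVec e i = ∑ j, M1⁻¹ i j * A.mulVec e j := by
    intro i
    rw [hM2def, ← Matrix.mulVec_mulVec, matvec_apply]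
  have hg0 : ∀ i, 0 ≤ M2.mulVec e i := by
    intro i
    rw [hgeq]
    exact Finset.sum_nonneg fun j _ => mul_nonneg (h1.2.2 i j) (hAe j)
  have hNzero : ∀ i, M2.mulVec e i = 0 → A.mulVec e i = 0 := by
    intro i hi
    rw [hgeq] at hi
    have hall := (Finset.sum_eq_zero_iff_of_nonneg
      (fun j _ => mul_nonneg (h1.2.2 i j) (hAe j))).mp hi i (Finset.mem_univ i)
    rcases mul_eq_zero.mp hall with h | h
    · exact absurd h (ne_of_gt (mmatrix_diag_pos h1 i).2)
    · exact h
  have hNpos : ∀ i j, 0 < M1⁻¹ i j → 0 < A.mulVec e j → 0 < M2.mulVec e i := by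
    intro i j hij hj
    rw [hgeq]
    exact Finset.sum_pos' (fun k _ => mul_nonneg (h1.2.2 i k) (hAe k))
      ⟨j, Finset.mem_univ j, mul_pos hij hj⟩
  -- connectivity for M2
  have hconn2 : Connects M2 (Nzero (M2.mulVec e)) (Npos (M2.mulVec e)) := by
    rcases hconn with hc | hc
    · -- Az connects: in fact M2 e > 0 everywhere on Nzero, contradiction
      intro i0 hi0
      exfalso
      have hMe0 : M2.mulVec e i0 = 0 := hi0
      have hAe0 : A.mulVec e i0 = 0 := hNzero i0 hMe0
      obtain ⟨r, hr, path, hp0, hpr, hpath⟩ := hc i0 hAe0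
      have hchain : ∀ k, k ≤ r → 0 < M1⁻¹ i0 (path k) := by
        intro k
        induction k with
        | zero =>
          intro _; rw [hp0]; exact (mmatrix_diag_pos h1 i0).2
        | succ m ih =>
          intro hm
          have hprev := ih (le_trans (Nat.le_succ m) hm)
          have hB := hpath (m + 1) (Nat.succ_le_succ (Nat.zero_le m)) hm
          have hAz' : Az (path m) (path (m + 1)) ≠ 0 := by simpa using hB
          have hne : path m ≠ path (m + 1) := by
            intro hEq
            exact hAz' (hEq ▸ (hdiag0 (path m)).1)
          exact mmatrix_inv_step h1 hprev hne
            (by rw [hM1od _ _ hne]; exact hAz')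
      have hpos := hNpos i0 (path r) (hchain r le_rfl) hpr
      linarith [hpos, hMe0]
    · -- As connects: transfer the path
      intro i0 hi0
      have hAe0 : A.mulVec e i0 = 0 := hNzero i0 hi0
      obtain ⟨r, hr, path, hp0, hpr, hpath⟩ := hc i0 hAe0
      refine ⟨r, hr, path, hp0, ?_, ?_⟩
      · have hp : 0 < A.mulVec e (path r) := hpr
        exact hNpos (path r) (path r) (mmatrix_diag_pos h1 (path r)).2 hp
      · intro k hk1 hkr
        have hB := hpath k hk1 hkr
        have hne : path (k - 1) ≠ path k := by
          intro hEq
          exact hB (hEq ▸ (hdiag0 (path k)).2)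
        exact hM2As _ _ hne hB
  -- M2 is a nonsingular M-matrix
  have hM2M : IsNonsingMMatrix M2 :=
    monotone_isNonsingMMatrix hM2Z (fun x hx => lemmaK hM2Z he hg0 hconn2 x hx)
  have hdetA : IsUnit A.det := by
    rw [hfact, Matrix.det_mul]
    exact (h1.2.1).mul (hM2M.2.1)
  refine ⟨⟨M1, M2, h1, hM2M, hfact⟩, hdetA, ?_⟩
  intro i j
  have hAinv : A⁻¹ = M2⁻¹ * M1⁻¹ := by rw [hfact, Matrix.mul_inv_rev]
  rw [hAinv, Matrix.mul_apply]
  exact Finset.sum_nonneg fun k _ => mul_nonneg (hM2M.2.2 i k) (h1.2.2 k j)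
end
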